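/- Let B₁ be a real m×n matrix and B₂ be a real n×p matrix with B₁B₂ = 0, let L = B₁ᵀB₁ + B₂B₂ᵀ, let H₀, H₁, H₂ be simplicial convolutional filters built from B₁, B₂ with coefficient sets (α_{i,0},…,α_{i,L₁}; β_{i,0},…,β_{i,L₂}) for i = 0,1,2, and for inputs x⁰ ∈ ℝᵐ, x¹ ∈ ℝⁿ, x² ∈ ℝᵖ let y = H₀B₁ᵀx⁰ + H₁x¹ + H₂B₂x² be the filter-bank output. If v ∈ ℝⁿ is a gradient eigenvector, i.e. v = B₁ᵀw for some w ∈ ℝᵐ and Lv = λ·v, then vᵀy = (β_{0,0} + Σ_{l=0}^{L₁} α_{0,l} λ^l)·(vᵀB₁ᵀx⁰) + (β_{1,0} + Σ_{l=0}^{L₁} α_{1,l} λ^l)·(vᵀx¹); in particular the upper-adjacent signal x² does not contribute at gradient frequencies. -/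
import Mathlib


open Matrix Finset

/-- A simplicial convolutional filter built from incidence matrices `B₁`, `B₂`:
`H = Σ_{l=0}^{L₁} α l • (B₁ᵀB₁)^l + Σ_{l=0}^{L₂} β l • (B₂B₂ᵀ)^l`. -/
noncomputable def scFilter {m n p : ℕ} (B₁ : Matrix (Fin m) (Fin n) ℝ)
    (B₂ : Matrix (Fin n) (Fin p) ℝ) (L₁ L₂ : ℕ) (α β : ℕ → ℝ) :
    Matrix (Fin n) (Fin n) ℝ :=
  (∑ l ∈ Finset.range (L₁ + 1), α l • (B₁ᵀ * B₁) ^ l)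
    + ∑ l ∈ Finset.range (L₂ + 1), β l • (B₂ * B₂ᵀ) ^ l

lemma my_sum_mulVec {ι n m : Type*} [Fintype n] (s : Finset ι)
    (f : ι → Matrix m n ℝ) (v : n → ℝ) :
    (∑ i ∈ s, f i).mulVec v = ∑ i ∈ s, (f i).mulVec v :=
  map_sum (AddMonoidHom.mk' (fun M : Matrix m n ℝ => M.mulVec v)
    (fun A B => Matrix.add_mulVec A B v)) f s

theorem filter_bank_gradient_response
    {m n p : ℕ} (B₁ : Matrix (Fin m) (Fin n) ℝ) (B₂ : Matrix (Fin n) (Fin p) ℝ)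
    (hB : B₁ * B₂ = 0) (L₁ L₂ : ℕ)
    (α₀ β₀ α₁ β₁ α₂ β₂ : ℕ → ℝ)
    (x0 : Fin m → ℝ) (x1 : Fin n → ℝ) (x2 : Fin p → ℝ)
    (v : Fin n → ℝ) (w : Fin m → ℝ) (hv : v = B₁ᵀ.mulVec w) (lam : ℝ)
    (heig : (B₁ᵀ * B₁ + B₂ * B₂ᵀ).mulVec v = lam • v) :
    v ⬝ᵥ ((scFilter B₁ B₂ L₁ L₂ α₀ β₀).mulVec (B₁ᵀ.mulVec x0)
        + (scFilter B₁ B₂ L₁ L₂ α₁ β₁).mulVec x1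
        + (scFilter B₁ B₂ L₁ L₂ α₂ β₂).mulVec (B₂.mulVec x2)) =
      (β₀ 0 + ∑ l ∈ Finset.range (L₁ + 1), α₀ l * lam ^ l) * (v ⬝ᵥ B₁ᵀ.mulVec x0)
        + (β₁ 0 + ∑ l ∈ Finset.range (L₁ + 1), α₁ l * lam ^ l) * (v ⬝ᵥ x1) := by
  have hBt : B₂ᵀ * B₁ᵀ = 0 := by
    have := congrArg Matrix.transpose hB
    simpa [Matrix.transpose_mul] using this
  have hv2 : B₂ᵀ.mulVec v = 0 := by
    rw [hv, Matrix.mulVec_mulVec, hBt, Matrix.zero_mulVec]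
  have h2 : (B₂ * B₂ᵀ).mulVec v = 0 := by
    rw [← Matrix.mulVec_mulVec, hv2, Matrix.mulVec_zero]
  have h1 : (B₁ᵀ * B₁).mulVec v = lam • v := by
    have h := heig
    rwa [Matrix.add_mulVec, h2, add_zero] at h
  have hpow1 : ∀ l, ((B₁ᵀ * B₁) ^ l).mulVec v = lam ^ l • v := by
    intro l
    induction l with
    | zero => simp
    | succ k ih =>
      rw [pow_succ, ← Matrix.mulVec_mulVec, h1, Matrix.mulVec_smul, ih,
        smul_smul, pow_succ]
      ring_nf
  have hpow2 : ∀ k, ((B₂ * B₂ᵀ) ^ (k + 1)).mulVec v = 0 := by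
    intro k
    rw [pow_succ, ← Matrix.mulVec_mulVec, h2, Matrix.mulVec_zero]
  -- main action of a filter on v
  have hkey : ∀ α β : ℕ → ℝ,
      (scFilter B₁ B₂ L₁ L₂ α β).mulVec v
        = (β 0 + ∑ l ∈ Finset.range (L₁ + 1), α l * lam ^ l) • v := by
    intro α β
    rw [scFilter, Matrix.add_mulVec, my_sum_mulVec, my_sum_mulVec]
    have hs1 : ∑ l ∈ Finset.range (L₁ + 1), (α l • (B₁ᵀ * B₁) ^ l).mulVec v
        = (∑ l ∈ Finset.range (L₁ + 1), α l * lam ^ l) • v := by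
      rw [Finset.sum_smul]
      refine Finset.sum_congr rfl fun l _ => ?_
      rw [Matrix.smul_mulVec, hpow1, smul_smul]
    have hs2 : ∑ l ∈ Finset.range (L₂ + 1), (β l • (B₂ * B₂ᵀ) ^ l).mulVec v
        = β 0 • v := by
      rw [Finset.sum_eq_single_of_mem 0 (Finset.mem_range.2 (Nat.succ_pos _))]
      · simp [Matrix.smul_mulVec]
      · intro l _ hl
        obtain ⟨k, rfl⟩ := Nat.exists_eq_succ_of_ne_zero hl
        rw [Matrix.smul_mulVec, hpow2, smul_zero]
    rw [hs1, hs2, add_smul, add_comm]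
  have hsym : ∀ α β : ℕ → ℝ,
      (scFilter B₁ B₂ L₁ L₂ α β)ᵀ = scFilter B₁ B₂ L₁ L₂ α β := by
    intro α β
    simp [scFilter, Matrix.transpose_add, Matrix.transpose_sum,
      Matrix.transpose_smul, Matrix.transpose_pow, Matrix.transpose_mul,
      Matrix.transpose_transpose]
  have hdot : ∀ (α β : ℕ → ℝ) (x : Fin n → ℝ),
      v ⬝ᵥ (scFilter B₁ B₂ L₁ L₂ α β).mulVec x
        = (β 0 + ∑ l ∈ Finset.range (L₁ + 1), α l * lam ^ l) * (v ⬝ᵥ x) := by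
    intro α β x
    rw [Matrix.dotProduct_mulVec, ← Matrix.mulVec_transpose, hsym, hkey,
      smul_dotProduct, smul_eq_mul]
  have hx2 : v ⬝ᵥ B₂.mulVec x2 = 0 := by
    rw [Matrix.dotProduct_mulVec, ← Matrix.mulVec_transpose, hv2,
      zero_dotProduct]
  rw [dotProduct_add, dotProduct_add, hdot, hdot, hdot, hx2]
  ring
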